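/- Let A be a pure nBA (type q, e₁,...,eₙ only). The map f : A → n[B_A] sending a to the formal sum Σᵢ aᵢ eᵢ of its coordinates is an isomorphism from A onto the nBA of n-central elements of the free Boolean vector space B_Aⁿ over the Boolean algebra B_A of coordinates of A. -/

import Mathlib

/-- A pure Boolean-like algebra of dimension `n`: a type with constants `e₁,…,eₙ` and an
`(n+1)`-ary operation `q` satisfying `q(eᵢ,x̄) = xᵢ`, in which every element `c` is
`n`-central: (B1) `q(c,e₁,…,eₙ) = c`, (B2) `q(c,x,…,x) = x`, and (B3) `q(c,−)` commutes
with `q` itself. -/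
structure PNBA (n : ℕ) where
  A : Type
  e : Fin n → A
  q : A → (Fin n → A) → A
  q_e : ∀ (i : Fin n) (x : Fin n → A), q (e i) x = x i
  B1 : ∀ c : A, q c e = c
  B2 : ∀ (c x : A), q c (fun _ => x) = x
  B3q : ∀ (c : A) (a : Fin n → A) (m : Fin n → Fin n → A),
      q c (fun i => q (a i) (m i)) = q (q c a) (fun j => q c (fun i => m i j))

/-- The ternary operation `p(x,y,z) = q(x,y,z,e₃,…,eₙ)`. -/
def PNBA.p {n : ℕ} (B : PNBA (n + 2)) (x y z : B.A) : B.A :=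
  B.q x (fun i => if i = 0 then y else if i = 1 then z else B.e i)

/-- Membership in `B_A`, the Boolean algebra of `2`-central elements of the `nBA`:
`x ∈ B_A` iff `p(x,y,y) = y` for all `y`. -/
def PNBA.inBA {n : ℕ} (B : PNBA (n + 2)) (x : B.A) : Prop :=
  ∀ y : B.A, B.p x y y = y

/-- The `i`-th coordinate of an element `a`:
`aᵢ = q(a, e₁,…,e₁, e₂, e₁,…,e₁)` with `e₂` in position `i`. -/
def PNBA.coord {n : ℕ} (B : PNBA (n + 2)) (a : B.A) (i : Fin (n + 2)) : B.A :=
  B.q a (fun k => if k = i then B.e 1 else B.e 0)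

/-- Join in the Boolean algebra `B_A`: `x ∨ y = p(x, y, e₂)`. -/
def PNBA.join {n : ℕ} (B : PNBA (n + 2)) (x y : B.A) : B.A := B.p x y (B.e 1)

/-- Meet in the Boolean algebra `B_A`: `x ∧ y = p(x, e₁, y)`. -/
def PNBA.meet {n : ℕ} (B : PNBA (n + 2)) (x y : B.A) : B.A := B.p x (B.e 0) y

/-- Finite join `⋁` in `B_A` of a list, with the bottom `e₁` as unit. -/
def PNBA.bigJoin {n : ℕ} (B : PNBA (n + 2)) (l : List B.A) : B.A :=
  l.foldr B.join (B.e 0)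

/-- The `n`-central elements of the free Boolean vector space `B_Aⁿ` over `B_A`
(with basis `e₁,…,eₙ`) are exactly the vectors with fully orthogonal coordinates:
all coordinates lie in `B_A`, their join is `1` and they are pairwise disjoint. -/
def PNBA.CentralVec {n : ℕ} (B : PNBA (n + 2)) (v : Fin (n + 2) → B.A) : Prop :=
  (∀ i, B.inBA (v i)) ∧
  B.bigJoin (List.ofFn v) = B.e 1 ∧
  (∀ i j : Fin (n + 2), i ≠ j → B.meet (v i) (v j) = B.e 0)

/-- The `q` operation of the `nBA` `n[B_A]` of `n`-central elements of `B_Aⁿ`: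
`q(v, w¹,…,wⁿ)ᵢ = ⋁ⱼ (vⱼ ∧ wʲᵢ)`. -/
def PNBA.qVec {n : ℕ} (B : PNBA (n + 2)) (v : Fin (n + 2) → B.A)
    (w : Fin (n + 2) → Fin (n + 2) → B.A) : Fin (n + 2) → B.A :=
  fun i => B.bigJoin (List.ofFn (fun j => B.meet (v j) (w j i)))

namespace PNBA

variable {n : ℕ}

lemma one_ne_zero' : (1 : Fin (n + 2)) ≠ 0 := by
  simp [Fin.ext_iff]

variable (B : PNBA (n + 2))

/-- The vector used in the definition of `p`. -/
def pv (y z : B.A) : Fin (n + 2) → B.A :=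
  fun i => if i = 0 then y else if i = 1 then z else B.e i

lemma p_def (x y z : B.A) : B.p x y z = B.q x (B.pv y z) := rfl

@[simp] lemma pv_zero (y z : B.A) : B.pv y z 0 = y := if_pos rfl

@[simp] lemma pv_one (y z : B.A) : B.pv y z 1 = z := by
  simp [pv, one_ne_zero']

lemma qcongr (c : B.A) {v w : Fin (n + 2) → B.A} (h : ∀ k, v k = w k) :
    B.q c v = B.q c w := congrArg _ (funext h)

lemma comp (c : B.A) (a b : Fin (n + 2) → B.A) :
    B.q (B.q c a) b = B.q c (fun i => B.q (a i) b) := by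
  have h := B.B3q c a (fun _ => b)
  simp only [B.B2] at h
  exact h.symm

lemma diag (c : B.A) (m : Fin (n + 2) → Fin (n + 2) → B.A) :
    B.q c (fun i => m i i) = B.q c (fun j => B.q c (fun i => m i j)) := by
  have h := B.B3q c B.e m
  simp only [B.q_e, B.B1] at h
  exact h

lemma idem (c : B.A) (m : Fin (n + 2) → Fin (n + 2) → B.A) :
    B.q c (fun k => B.q c (m k)) = B.q c (fun k => m k k) := by
  have h := B.diag c (fun i j => m j i)
  exact h.symm

/-- A `2`-central element only looks at the first two coordinates. -/
lemma binary {x : B.A} (hx : B.inBA x) (w : Fin (n + 2) → B.A) :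
    B.q x w = B.p x (w 0) (w 1) := by
  have h0 : B.pv (B.q x w) (B.q x w)
      = fun k => B.q x (if k = 0 then w else if k = 1 then w else fun _ => B.e k) := by
    funext k
    by_cases h : k = 0
    · subst h; simp [pv]
    · by_cases h1 : k = 1
      · subst h1; simp [pv, one_ne_zero']
      · simp [pv, h, h1, B.B2]
  have h2 : B.p x (B.q x w) (B.q x w) = B.q x w := hx _
  rw [p_def, h0, B.idem] at h2
  rw [← h2, p_def]
  apply qcongr
  intro k
  by_cases h : k = 0
  · subst h; simp [pv]
  · by_cases h1 : k = 1
    · subst h1; simp [pv, one_ne_zero']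
    · simp [pv, h, h1]

/-- A `2`-central element commutes with `q`. -/
lemma comm {x : B.A} (hx : B.inBA x) (c : B.A) (w w' : Fin (n + 2) → B.A) :
    B.p x (B.q c w) (B.q c w') = B.q c (fun j => B.p x (w j) (w' j)) := by
  have h0 : B.pv (B.q c w) (B.q c w')
      = fun k => B.q c (if k = 0 then w else if k = 1 then w' else fun _ => B.e k) := by
    funext k
    by_cases h : k = 0
    · subst h; simp [pv]
    · by_cases h1 : k = 1
      · subst h1; simp [pv, one_ne_zero']
      · simp [pv, h, h1, B.B2]
  rw [p_def, h0]
  have h := B.B3q x (fun _ => c)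
    (fun k => if k = 0 then w else if k = 1 then w' else fun _ => B.e k)
  rw [B.B2] at h
  rw [h]
  apply qcongr
  intro j
  rw [B.binary hx]
  simp only []
  congr 1 <;> simp [one_ne_zero']

def delta (i : Fin (n + 2)) : Fin (n + 2) → B.A :=
  fun k => if k = i then B.e 1 else B.e 0

lemma coord_def (a : B.A) (i : Fin (n + 2)) : B.coord a i = B.q a (B.delta i) := rfl

lemma coord_e (i j : Fin (n + 2)) :
    B.coord (B.e i) j = if i = j then B.e 1 else B.e 0 := by
  rw [coord_def, B.q_e]; rfl

lemma inBA_coord (a : B.A) (i : Fin (n + 2)) : B.inBA (B.coord a i) := by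
  intro y
  rw [coord_def, p_def, B.comp]
  have h : (fun k => B.q (B.delta i k) (B.pv y y)) = fun _ => y := by
    funext k
    by_cases h : k = i <;> simp [delta, h, B.q_e, pv, one_ne_zero']
  rw [h, B.B2]

lemma coord_q (a : B.A) (w : Fin (n + 2) → B.A) (j : Fin (n + 2)) :
    B.coord (B.q a w) j = B.q a (fun k => B.coord (w k) j) := by
  rw [coord_def, B.comp]; rfl

lemma meet_coord (a : B.A) (i : Fin (n + 2)) (y : B.A) :
    B.meet (B.coord a i) y = B.q a (fun k => if k = i then y else B.e 0) := by
  show B.p (B.q a (B.delta i)) (B.e 0) y = _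
  rw [p_def, B.comp]
  apply qcongr
  intro k
  by_cases h : k = i <;> simp [delta, h, B.q_e, pv, one_ne_zero']

lemma meet_coord_coord (a : B.A) {i j : Fin (n + 2)} (hij : i ≠ j) :
    B.meet (B.coord a i) (B.coord a j) = B.e 0 := by
  rw [B.meet_coord, coord_def]
  have h1 : (fun k => if k = i then B.q a (B.delta j) else B.e 0)
      = fun k => B.q a (if k = i then B.delta j else fun _ => B.e 0) := by
    funext k; by_cases h : k = i <;> simp [h, B.B2]
  rw [h1, B.idem]
  have h2 : (fun k => (if k = i then B.delta j else fun _ => B.e 0) k)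
      = fun _ => B.e 0 := by
    funext k
    by_cases h : k = i
    · subst h; simp [delta, hij]
    · simp [h]
  rw [h2, B.B2]

lemma pv_eq_e : B.pv (B.e 0) (B.e 1) = B.e := by
  funext k
  by_cases h : k = 0
  · subst h; simp [pv]
  · by_cases h1 : k = 1
    · subst h1; simp [pv, one_ne_zero']
    · simp [pv, h, h1]

lemma p_zero_one (x : B.A) : B.p x (B.e 0) (B.e 1) = x := by
  rw [p_def, pv_eq_e, B.B1]

lemma meet_one (x : B.A) : B.meet x (B.e 1) = x := B.p_zero_one x

lemma join_zero (x : B.A) : B.join x (B.e 0) = x := B.p_zero_one x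

lemma meet_zero_left (y : B.A) : B.meet (B.e 0) y = B.e 0 := by
  show B.p (B.e 0) (B.e 0) y = B.e 0
  rw [p_def, B.q_e]; simp [pv]

lemma meet_one_left (y : B.A) : B.meet (B.e 1) y = y := by
  show B.p (B.e 1) (B.e 0) y = y
  rw [p_def, B.q_e]; simp [pv, one_ne_zero']

lemma inBA_e0 : B.inBA (B.e 0) := fun y => by
  rw [p_def, B.q_e]; simp [pv]

lemma inBA_e1 : B.inBA (B.e 1) := fun y => by
  rw [p_def, B.q_e]; simp [pv, one_ne_zero']

lemma inBA_join {x y : B.A} (hx : B.inBA x) (hy : B.inBA y) : B.inBA (B.join x y) := by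
  intro t
  show B.p (B.q x (B.pv y (B.e 1))) t t = t
  rw [p_def, B.comp]
  have h : (fun k => B.q (B.pv y (B.e 1) k) (B.pv t t)) = B.pv t t := by
    funext k
    by_cases h : k = 0
    · subst h
      simp only [pv_zero]
      exact hy t
    · by_cases h1 : k = 1
      · subst h1; simp [pv, B.q_e, one_ne_zero']
      · simp [pv, h, h1, B.q_e]
  rw [h]
  exact hx t

lemma inBA_fold (l : List B.A) (hl : ∀ x ∈ l, B.inBA x) :
    B.inBA (l.foldr B.join (B.e 0)) := by
  induction l with
  | nil => exact B.inBA_e0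
  | cons x l ih =>
      exact B.inBA_join (hl x List.mem_cons_self)
        (ih (fun y hy => hl y (List.mem_cons_of_mem x hy)))

lemma absorbL (x : B.A) (U : Fin (n + 2) → B.A) (Z : B.A) :
    B.p x (B.q x U) Z = B.p x (U 0) Z := by
  rw [p_def, p_def]
  have h0 : B.pv (B.q x U) Z
      = fun k => B.q x (if k = 0 then U else if k = 1 then (fun _ => Z) else fun _ => B.e k) := by
    funext k
    by_cases h : k = 0
    · subst h; simp [pv]
    · by_cases h1 : k = 1
      · subst h1; simp [pv, one_ne_zero', B.B2]
      · simp [pv, h, h1, B.B2]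
  rw [h0, B.idem]
  apply qcongr
  intro k
  by_cases h : k = 0
  · subst h; simp [pv]
  · by_cases h1 : k = 1
    · subst h1; simp [pv, one_ne_zero']
    · simp [pv, h, h1]

lemma absorbR (x : B.A) (Y : B.A) (W : Fin (n + 2) → B.A) :
    B.p x Y (B.q x W) = B.p x Y (W 1) := by
  rw [p_def, p_def]
  have h0 : B.pv Y (B.q x W)
      = fun k => B.q x (if k = 0 then (fun _ => Y) else if k = 1 then W else fun _ => B.e k) := by
    funext k
    by_cases h : k = 0
    · subst h; simp [pv, B.B2]
    · by_cases h1 : k = 1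
      · subst h1; simp [pv, one_ne_zero']
      · simp [pv, h, h1, B.B2]
  rw [h0, B.idem]
  apply qcongr
  intro k
  by_cases h : k = 0
  · subst h; simp [pv]
  · by_cases h1 : k = 1
    · subst h1; simp [pv, one_ne_zero']
    · simp [pv, h, h1]

lemma p_cancel {x t : B.A} (hx : B.inBA x) (h : B.meet x t = B.e 0) :
    B.p x t (B.e 0) = t := by
  have h2 : B.p x t (B.meet x t) = t := by
    have h3 := B.absorbR x t (B.pv (B.e 0) t)
    rw [pv_one] at h3
    exact h3.trans (hx t)
  calc B.p x t (B.e 0) = B.p x t (B.meet x t) := by rw [h]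
  _ = t := h2

lemma meet_q {s : B.A} (hs : B.inBA s) (x : B.A) (W : Fin (n + 2) → B.A) :
    B.meet s (B.q x W) = B.q x (fun m => B.meet s (W m)) := by
  have h := B.comm hs x (fun _ => B.e 0) W
  rw [B.B2] at h
  exact h

lemma meet_join_left {s : B.A} (x Bv : B.A) :
    B.meet (B.join x s) Bv = B.p x (B.meet s Bv) Bv := by
  show B.p (B.q x (B.pv s (B.e 1))) (B.e 0) Bv = _
  rw [p_def, B.comp, p_def]
  apply qcongr
  intro k
  by_cases h : k = 0
  · subst h
    simp only [pv_zero]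
    rfl
  · by_cases h1 : k = 1
    · subst h1; simp [pv, B.q_e, one_ne_zero']
    · simp [pv, h, h1, B.q_e]

lemma coord_p {x : B.A} (hx : B.inBA x) (y z : B.A) (j : Fin (n + 2)) :
    B.coord (B.p x y z) j = B.p x (B.coord y j) (B.coord z j) := by
  rw [coord_def, p_def, B.comp, B.binary hx]
  simp only [pv_zero, pv_one]
  rfl

/-- Folding joins of `coord a k ∧ u k` over a duplicate-free index list. -/
lemma fold_meet (a : B.A) (u : Fin (n + 2) → B.A) (hu : ∀ k, B.inBA (u k)) :
    ∀ l : List (Fin (n + 2)), l.Nodup →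
    (l.map (fun k => B.meet (B.coord a k) (u k))).foldr B.join (B.e 0)
      = B.q a (fun m => if m ∈ l then u m else B.e 0) := by
  intro l
  induction l with
  | nil =>
      intro _
      simp only [List.map_nil, List.foldr_nil, List.not_mem_nil, if_false]
      exact (B.B2 a (B.e 0)).symm
  | cons i l ih =>
      intro hnd
      obtain ⟨hil, hndl⟩ := List.nodup_cons.mp hnd
      rw [List.map_cons, List.foldr_cons, ih hndl]
      set P : Fin (n + 2) → B.A := fun m => if m ∈ l then u m else B.e 0 with hP
      -- join (meet (coord a i) (u i)) (q a P)
      show B.p (B.meet (B.coord a i) (u i)) (B.q a P) (B.e 1) = _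
      rw [B.meet_coord, p_def, B.comp]
      have h1 : (fun k => B.q ((fun k => if k = i then u i else B.e 0) k)
            (B.pv (B.q a P) (B.e 1)))
          = fun k => B.q a (if k = i then (fun m => B.p (u i) (P m) (B.e 1)) else P) := by
        funext k
        by_cases h : k = i
        · simp only [h, if_pos rfl]
          have hc := B.comm (hu i) a P (fun _ => B.e 1)
          rw [B.B2] at hc
          exact hc
        · simp only [if_neg h]
          rw [B.q_e]
          simp [pv]
      rw [h1, B.idem]
      apply qcongr
      intro k
      by_cases h : k = i
      · subst h
        simp only [if_pos rfl, List.mem_cons, true_or, if_true]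
        have hPk : P k = B.e 0 := by simp [hP, hil]
        rw [hPk]
        exact B.join_zero (u k)
      · simp only [if_neg h, hP, List.mem_cons]
        have : (k = i ∨ k ∈ l) ↔ k ∈ l := by simp [h]
        by_cases hk : k ∈ l <;> simp [hk, h]

def mkEl (v : Fin (n + 2) → B.A) : List (Fin (n + 2)) → B.A
  | [] => B.e 0
  | i :: l => B.p (v i) (mkEl v l) (B.e i)

lemma mkEl_coord (a : B.A) : ∀ l : List (Fin (n + 2)),
    B.mkEl (B.coord a) l = B.q a (fun k => if k ∈ l then B.e k else B.e 0) := by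
  intro l
  induction l with
  | nil =>
      simp only [List.not_mem_nil, if_false]
      exact (B.B2 a (B.e 0)).symm
  | cons i l ih =>
      show B.p (B.coord a i) (B.mkEl (B.coord a) l) (B.e i) = _
      rw [ih]
      set P : Fin (n + 2) → B.A := fun k => if k ∈ l then B.e k else B.e 0 with hP
      rw [coord_def, p_def, B.comp]
      have h1 : (fun k => B.q (B.delta i k) (B.pv (B.q a P) (B.e i)))
          = fun k => B.q a (if k = i then (fun _ => B.e i) else P) := by
        funext k
        by_cases h : k = i
        · simp [delta, h, B.q_e, pv, one_ne_zero', B.B2]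
        · simp [delta, h, B.q_e, pv]
      rw [h1, B.idem]
      apply qcongr
      intro k
      by_cases h : k = i
      · subst h; simp
      · simp only [if_neg h, hP, List.mem_cons]
        by_cases hk : k ∈ l <;> simp [hk, h]

lemma coord_mkEl (v : Fin (n + 2) → B.A) (hin : ∀ i, B.inBA (v i))
    (horth : ∀ i j : Fin (n + 2), i ≠ j → B.meet (v i) (v j) = B.e 0) (j : Fin (n + 2)) :
    ∀ l : List (Fin (n + 2)), l.Nodup →
    B.meet ((l.map v).foldr B.join (B.e 0)) (B.coord (B.mkEl v l) j)
      = if j ∈ l then v j else B.e 0 := by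
  intro l
  induction l with
  | nil =>
      intro _
      simp only [List.map_nil, List.foldr_nil, List.not_mem_nil, if_false]
      exact B.meet_zero_left _
  | cons i l ih =>
      intro hnd
      obtain ⟨hil, hndl⟩ := List.nodup_cons.mp hnd
      have hIH := ih hndl
      set s : B.A := (l.map v).foldr B.join (B.e 0) with hs_def
      have hs : B.inBA s := by
        apply B.inBA_fold
        intro x hx
        obtain ⟨k, _, rfl⟩ := List.mem_map.mp hx
        exact hin k
      set C : B.A := B.coord (B.mkEl v l) j with hC
      set d : B.A := B.coord (B.e i) j with hd
      rw [List.map_cons, List.foldr_cons]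
      have hmk : B.coord (B.mkEl v (i :: l)) j = B.p (v i) C d := by
        show B.coord (B.p (v i) (B.mkEl v l) (B.e i)) j = _
        rw [B.coord_p (hin i)]
      rw [hmk]
      rw [B.meet_join_left]
      -- p (v i) (meet s (p (v i) C d)) (p (v i) C d)
      have hstep : B.meet s (B.p (v i) C d) = B.q (v i) (fun m => B.meet s (B.pv C d m)) := by
        rw [p_def, B.meet_q hs]
      rw [hstep]
      have habs : B.p (v i) (B.q (v i) (fun m => B.meet s (B.pv C d m))) (B.p (v i) C d)
          = B.p (v i) (B.meet s C) (B.p (v i) C d) := by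
        rw [B.absorbL]
        simp only [pv_zero]
      rw [habs]
      have habs2 : B.p (v i) (B.meet s C) (B.p (v i) C d)
          = B.p (v i) (B.meet s C) d := by
        rw [p_def (B := B) (v i) C d, B.absorbR, pv_one]
      rw [habs2]
      by_cases hji : i = j
      · subst hji
        have hd1 : d = B.e 1 := by rw [hd, coord_e]; simp
        have hC0 : B.meet s C = B.e 0 := by
          rw [hIH, if_neg hil]
        rw [hd1, hC0, B.p_zero_one]
        simp
      · have hd0 : d = B.e 0 := by rw [hd, coord_e, if_neg hji]
        rw [hd0, hIH]
        have hmem : (j ∈ i :: l) ↔ (j ∈ l) := by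
          simp [List.mem_cons, Ne.symm hji]
        by_cases hk : j ∈ l
        · rw [if_pos hk, if_pos (hmem.mpr hk)]
          exact B.p_cancel (hin i) (horth i j hji)
        · rw [if_neg hk, if_neg (fun h => hk (hmem.mp h))]
          exact hin i (B.e 0)

lemma mkEl_coord_finRange (a : B.A) :
    B.mkEl (B.coord a) (List.finRange (n + 2)) = a := by
  rw [B.mkEl_coord]
  have h : (fun k : Fin (n + 2) => if k ∈ List.finRange (n + 2) then B.e k else B.e 0) = B.e := by
    funext k; simp [List.mem_finRange]
  rw [h, B.B1]

end PNBA
/-- Representation theorem: the coordinate map `a ↦ (a₁,…,aₙ)` is an isomorphism from a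
pure `nBA` `A` onto the `nBA` `n[B_A]` of `n`-central elements of the free Boolean vector
space `B_Aⁿ`: it lands in the central vectors, is injective and surjective onto them, and
carries the operation `q` of `A` to the operation `q` of `n[B_A]` (and trivially the
constants `eᵢ` to their coordinate vectors). -/
theorem representation_nBA_central_vectors {n : ℕ} (B : PNBA (n + 2)) :
    (∀ a : B.A, B.CentralVec (B.coord a)) ∧
    (∀ a b : B.A, B.coord a = B.coord b → a = b) ∧
    (∀ v : Fin (n + 2) → B.A, B.CentralVec v → ∃ a : B.A, B.coord a = v) ∧
    (∀ (a : B.A) (w : Fin (n + 2) → B.A),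
      B.coord (B.q a w) = B.qVec (B.coord a) (fun j => B.coord (w j))) := by
  refine ⟨?_, ?_, ?_, ?_⟩
  · -- coord lands in central vectors
    intro a
    refine ⟨fun i => B.inBA_coord a i, ?_, fun i j hij => B.meet_coord_coord a hij⟩
    show (List.ofFn (B.coord a)).foldr B.join (B.e 0) = B.e 1
    rw [List.ofFn_eq_map]
    have h : (List.finRange (n + 2)).map (B.coord a)
        = (List.finRange (n + 2)).map (fun k => B.meet (B.coord a k) ((fun _ => B.e 1) k)) := by
      apply List.map_congr_left
      intro k _
      exact (B.meet_one (B.coord a k)).symm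
    rw [h, B.fold_meet a (fun _ => B.e 1) (fun _ => B.inBA_e1) _ (List.nodup_finRange _)]
    have h2 : (fun m : Fin (n + 2) => if m ∈ List.finRange (n + 2) then B.e 1 else B.e 0)
        = fun _ => B.e 1 := by
      funext m; simp [List.mem_finRange]
    rw [h2, B.B2]
  · -- injectivity
    intro a b h
    rw [← B.mkEl_coord_finRange a, ← B.mkEl_coord_finRange b, h]
  · -- surjectivity onto central vectors
    rintro v ⟨h1, h2, h3⟩
    refine ⟨B.mkEl v (List.finRange (n + 2)), ?_⟩
    funext j
    have h := B.coord_mkEl v h1 h3 j (List.finRange (n + 2)) (List.nodup_finRange _)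
    have hbig : ((List.finRange (n + 2)).map v).foldr B.join (B.e 0) = B.e 1 := by
      rw [← List.ofFn_eq_map]
      exact h2
    rw [hbig, B.meet_one_left, if_pos (List.mem_finRange j)] at h
    exact h
  · -- homomorphism
    intro a w
    funext j
    rw [B.coord_q]
    show _ = B.bigJoin (List.ofFn fun k => B.meet (B.coord a k) (B.coord (w k) j))
    show _ = (List.ofFn fun k => B.meet (B.coord a k) (B.coord (w k) j)).foldr B.join (B.e 0)
    rw [List.ofFn_eq_map,
      B.fold_meet a (fun k => B.coord (w k) j) (fun k => B.inBA_coord (w k) j) _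
        (List.nodup_finRange _)]
    apply B.qcongr
    intro k
    simp [List.mem_finRange]
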